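/- The function Γ(λ₁, λ₂) := log ζ₀(λ₁,λ₂) + λ₁α₁ + λ₂α₂ is strictly convex on [0,∞)², for any fixed α₁, α₂ > 0. -/

import Mathlib

noncomputable def zeta (i : ℕ) (l1 l2 : ℝ) : ℝ :=
  ∫ y in (0:ℝ)..1, y ^ i * Real.exp (-l1 * y - l2 * y ^ 2)

namespace Stmt8Aux

open MeasureTheory Set intervalIntegral

/-- The exponent, which is linear in the parameter `p`. -/
def L (p : ℝ × ℝ) (s : ℝ) : ℝ := -p.1 * s - p.2 * s ^ 2

noncomputable def u (p : ℝ × ℝ) (s : ℝ) : ℝ := Real.exp (L p s)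

lemma contL (p : ℝ × ℝ) : Continuous (L p) := by unfold L; continuity

lemma contU (p : ℝ × ℝ) : Continuous (u p) := Real.continuous_exp.comp (contL p)

lemma uPos (p : ℝ × ℝ) (s : ℝ) : 0 < u p s := Real.exp_pos _

noncomputable def Z (p : ℝ × ℝ) : ℝ := ∫ s in (0:ℝ)..1, u p s

lemma zeta_eq (p : ℝ × ℝ) : zeta 0 p.1 p.2 = Z p := by
  unfold zeta Z u L
  norm_num

lemma intInt (p : ℝ × ℝ) : IntervalIntegrable (u p) volume 0 1 :=
  (contU p).intervalIntegrable _ _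

lemma Zpos (p : ℝ × ℝ) : 0 < Z p :=
  intervalIntegral_pos_of_pos_on (intInt p) (fun s _ => uPos p s) one_pos

lemma L_smul_add (a b : ℝ) (p q : ℝ × ℝ) (s : ℝ) :
    L (a • p + b • q) s = a * L p s + b * L q s := by
  simp only [L, Prod.fst_add, Prod.snd_add, Prod.smul_fst, Prod.smul_snd, smul_eq_mul]; ring

lemma u_comb (a b : ℝ) (p q : ℝ × ℝ) (s : ℝ) :
    u (a • p + b • q) s = u p s ^ a * u q s ^ b := by
  simp only [u]
  rw [L_smul_add, Real.exp_add, mul_comm a, mul_comm b, Real.exp_mul, Real.exp_mul]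

lemma Z_as_set (p : ℝ × ℝ) : Z p = ∫ s in Ioc (0:ℝ) 1, u p s := by
  rw [Z, integral_of_le zero_le_one]

lemma ofReal_Z (p : ℝ × ℝ) :
    ENNReal.ofReal (Z p) = ∫⁻ s in Ioc (0:ℝ) 1, ENNReal.ofReal (u p s) := by
  rw [Z_as_set]
  exact ofReal_integral_eq_lintegral_ofReal ((contU p).integrableOn_Ioc)
    (Filter.Eventually.of_forall fun s => (uPos p s).le)

/-- Hölder's inequality for `Z`. -/
lemma Z_holder {a b : ℝ} (ha : 0 < a) (hb : 0 < b) (hab : a + b = 1) (p q : ℝ × ℝ) :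
    Z (a • p + b • q) ≤ Z p ^ a * Z q ^ b := by
  have ha1 : a < 1 := by linarith
  set μ := volume.restrict (Ioc (0:ℝ) 1) with hμ
  have hconj : (1/a).HolderConjugate (1/b) := by
    constructor
    · rw [one_div, one_div, inv_inv, inv_inv, inv_one]; exact hab
    · positivity
    · positivity
  set f : ℝ → ENNReal := fun s => ENNReal.ofReal (u p s) ^ a with hf
  set g : ℝ → ENNReal := fun s => ENNReal.ofReal (u q s) ^ b with hg
  have hfm : AEMeasurable f μ :=
    (ENNReal.continuous_rpow_const.comp (ENNReal.continuous_ofReal.comp (contU p))).aemeasurable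
  have hgm : AEMeasurable g μ :=
    (ENNReal.continuous_rpow_const.comp (ENNReal.continuous_ofReal.comp (contU q))).aemeasurable
  have H := ENNReal.lintegral_mul_le_Lp_mul_Lq μ hconj hfm hgm
  have hfg : ∀ s, (f * g) s = ENNReal.ofReal (u (a • p + b • q) s) := by
    intro s
    simp only [Pi.mul_apply, hf, hg, ENNReal.ofReal_rpow_of_pos (uPos p s),
      ENNReal.ofReal_rpow_of_pos (uPos q s), u_comb,
      ← ENNReal.ofReal_mul (Real.rpow_nonneg (uPos p s).le a)]
  have hfP : ∀ s, f s ^ (1/a) = ENNReal.ofReal (u p s) := by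
    intro s
    rw [hf, ← ENNReal.rpow_mul, mul_one_div_cancel ha.ne', ENNReal.rpow_one]
  have hgQ : ∀ s, g s ^ (1/b) = ENNReal.ofReal (u q s) := by
    intro s
    rw [hg, ← ENNReal.rpow_mul, mul_one_div_cancel hb.ne', ENNReal.rpow_one]
  rw [lintegral_congr hfg] at H
  simp only [hfP, hgQ, one_div_one_div] at H
  rw [← ofReal_Z, ← ofReal_Z, ← ofReal_Z,
    ENNReal.ofReal_rpow_of_pos (Zpos p), ENNReal.ofReal_rpow_of_pos (Zpos q),
    ← ENNReal.ofReal_mul (Real.rpow_nonneg (Zpos p).le a)] at H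
  exact (ENNReal.ofReal_le_ofReal_iff
    (mul_nonneg (Real.rpow_nonneg (Zpos p).le a) (Real.rpow_nonneg (Zpos q).le b))).mp H

lemma logZ_convex : ConvexOn ℝ Set.univ (fun p : ℝ × ℝ => Real.log (Z p)) := by
  refine ⟨convex_univ, ?_⟩
  intro p _ q _ a b ha hb hab
  rcases ha.eq_or_lt with rfl | ha'
  · simp only [zero_smul, zero_add, smul_eq_mul, zero_mul] at *
    rw [(by linarith : b = 1)]; simp
  rcases hb.eq_or_lt with rfl | hb'
  · simp only [zero_smul, add_zero, smul_eq_mul, zero_mul] at *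
    rw [(by linarith : a = 1)]; simp
  have h := Z_holder ha' hb' hab p q
  calc Real.log (Z (a • p + b • q)) ≤ Real.log (Z p ^ a * Z q ^ b) :=
        Real.log_le_log (Zpos _) h
    _ = a * Real.log (Z p) + b * Real.log (Z q) := by
        rw [Real.log_mul (Real.rpow_pos_of_pos (Zpos p) a).ne'
          (Real.rpow_pos_of_pos (Zpos q) b).ne', Real.log_rpow (Zpos p),
          Real.log_rpow (Zpos q)]

/-- Strict Cauchy–Schwarz: the midpoint inequality is strict when `p ≠ q`. -/
lemma Z_midpoint_strict {p q : ℝ × ℝ} (hpq : p ≠ q) :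
    Z ((1/2:ℝ) • p + (1/2:ℝ) • q) ^ 2 < Z p * Z q := by
  set f : ℝ → ℝ := fun s => Real.exp (L p s / 2) with hfdef
  set g : ℝ → ℝ := fun s => Real.exp (L q s / 2) with hgdef
  have hfc : Continuous f := Real.continuous_exp.comp ((contL p).div_const 2)
  have hgc : Continuous g := Real.continuous_exp.comp ((contL q).div_const 2)
  have hf2 : ∀ s, f s ^ 2 = u p s := by
    intro s; rw [sq, ← Real.exp_add, add_halves]; rfl
  have hg2 : ∀ s, g s ^ 2 = u q s := by
    intro s; rw [sq, ← Real.exp_add, add_halves]; rfl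
  have hmul : ∀ s, f s * g s = u ((1/2:ℝ) • p + (1/2:ℝ) • q) s := by
    intro s
    rw [← Real.exp_add, u, L_smul_add]
    congr 1; ring
  set B := Z ((1/2:ℝ) • p + (1/2:ℝ) • q) with hB
  set C := Z q with hC
  set c : ℝ := B / C with hc
  have hCpos : 0 < C := Zpos q
  have hBint : IntervalIntegrable (fun s => f s * g s) volume 0 1 :=
    (hfc.mul hgc).intervalIntegrable _ _
  have hBeq : B = ∫ s in (0:ℝ)..1, f s * g s := by
    rw [hB, Z]; exact intervalIntegral.integral_congr fun s _ => (hmul s).symm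
  set h : ℝ → ℝ := fun s => f s - c * g s with hh
  have hhc : Continuous h := hfc.sub (continuous_const.mul hgc)
  have hexp : ∀ s, h s ^ 2 = u p s - (2*c) * (f s * g s) + c^2 * u q s := by
    intro s; rw [← hf2 s, ← hg2 s]; simp only [hh]; ring
  have hint : (∫ s in (0:ℝ)..1, h s ^ 2) = Z p - (2*c) * B + c^2 * C := by
    rw [intervalIntegral.integral_congr (fun s _ => hexp s), hBeq]
    rw [intervalIntegral.integral_add (((intInt p).sub (hBint.const_mul (2*c))))
      ((intInt q).const_mul _),
      intervalIntegral.integral_sub (intInt p) (hBint.const_mul (2*c)),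
      intervalIntegral.integral_const_mul, intervalIntegral.integral_const_mul]
    rfl
  have hkey : ∃ s₁ ∈ Ioo (0:ℝ) 1, h s₁ ≠ 0 := by
    by_contra hcon
    push_neg at hcon
    have hval : ∀ s ∈ Ioo (0:ℝ) 1, Real.exp ((L p s - L q s)/2) = c := by
      intro s hs
      have h0 := hcon s hs
      have hfs : f s = c * g s := by
        have := sub_eq_zero.mp h0; linarith [this]
      have hgpos : 0 < g s := Real.exp_pos _
      have : c = f s / g s := by field_simp [hfs]; linarith [hfs]
      rw [this, hfdef, hgdef]
      simp only
      rw [← Real.exp_sub]; congr 1; ring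
    have h14 : (1/4 : ℝ) ∈ Ioo (0:ℝ) 1 := by norm_num
    have h12 : (1/2 : ℝ) ∈ Ioo (0:ℝ) 1 := by norm_num
    have h34 : (3/4 : ℝ) ∈ Ioo (0:ℝ) 1 := by norm_num
    have e1 := (hval _ h14).trans (hval _ h12).symm
    have e2 := (hval _ h12).trans (hval _ h34).symm
    rw [Real.exp_eq_exp] at e1 e2
    simp only [L] at e1 e2
    have hp1 : p.1 = q.1 := by nlinarith [e1, e2]
    have hp2 : p.2 = q.2 := by nlinarith [e1, e2]
    exact hpq (Prod.ext hp1 hp2)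
  obtain ⟨s₁, hs₁, hs₁ne⟩ := hkey
  have hpos : 0 < ∫ s in (0:ℝ)..1, h s ^ 2 := by
    rw [integral_pos_iff_support_of_nonneg_ae'
      (Filter.Eventually.of_forall fun s => sq_nonneg (h s))
      ((hhc.pow 2).intervalIntegrable _ _)]
    refine ⟨one_pos, ?_⟩
    have hUopen : IsOpen ({s | h s ≠ 0} ∩ Ioo 0 1) :=
      ((isOpen_compl_singleton.preimage hhc).inter isOpen_Ioo)
    have hUne : ({s | h s ≠ 0} ∩ Ioo 0 1).Nonempty := ⟨s₁, hs₁ne, hs₁⟩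
    refine lt_of_lt_of_le (hUopen.measure_pos volume hUne) (measure_mono ?_)
    rintro s ⟨hs1, hs2⟩
    exact ⟨pow_ne_zero 2 hs1, Ioo_subset_Ioc_self hs2⟩
  have hcC : c * C = B := div_mul_cancel₀ B hCpos.ne'
  have hsub : 0 < Z p - B^2/C := by
    have heq2 : Z p - (2*c) * B + c^2 * C = Z p - B^2/C := by
      field_simp [hc]; rw [← hcC]; ring
    linarith [hint ▸ hpos, heq2]
  have := (div_lt_iff₀ hCpos).mp (by linarith : B^2/C < Z p)
  linarith [this]

/-- A convex function that satisfies a strict midpoint inequality is strictly convex. -/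
lemma glue {E : Type*} [AddCommGroup E] [Module ℝ E] [NoZeroSMulDivisors ℝ E]
    {f : E → ℝ} {s : Set E} (hs : Convex ℝ s) (hc : ConvexOn ℝ s f)
    (hm : ∀ x ∈ s, ∀ y ∈ s, x ≠ y →
      f ((1/2:ℝ) • x + (1/2:ℝ) • y) < (f x + f y) / 2) :
    StrictConvexOn ℝ s f := by
  have key : ∀ x ∈ s, ∀ y ∈ s, x ≠ y → ∀ a b : ℝ, 0 < a → 0 < b → a + b = 1 →
      a ≤ 1/2 → f (a • x + b • y) < a * f x + b * f y := by
    intro x hx y hy hxy a b ha hb hab hhalf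
    have hb1 : b = 1 - a := by linarith
    subst hb1
    rcases eq_or_lt_of_le hhalf with heq | hlt
    · have h := hm x hx y hy hxy
      rw [heq]; norm_num at *; linarith
    · set w := (2*a) • x + (1-2*a) • y with hw
      have hws : w ∈ s := hs hx hy (by linarith) (by linarith) (by ring)
      have hwy : w ≠ y := by
        intro hcon
        have h4 : (2*a) • y + (1-2*a) • y = y := by
          rw [← add_smul]; norm_num
        have h3 : (2*a) • x + (1-2*a) • y = (2*a) • y + (1-2*a) • y := hcon.trans h4.symm
        have h2 : (2*a) • x = (2*a) • y := add_right_cancel h3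
        exact hxy (smul_right_injective E (by positivity : (2*a) ≠ 0) h2)
      have hmid : a • x + (1-a) • y = (1/2:ℝ) • w + (1/2:ℝ) • y := by
        rw [hw]
        module
      have h1 := hm w hws y hy hwy
      have h2 : f w ≤ (2*a) * f x + (1-2*a) * f y :=
        hc.2 hx hy (by linarith) (by linarith) (by ring)
      rw [hmid]
      linarith
  refine ⟨hs, ?_⟩
  intro x hx y hy hxy a b ha hb hab
  simp only [smul_eq_mul]
  rcases le_or_gt a (1/2) with h | h
  · exact key x hx y hy hxy a b ha hb hab h
  · have h' := key y hy x hx (Ne.symm hxy) b a hb ha (by linarith) (by linarith)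
    rw [add_comm (a • x)]
    linarith

end Stmt8Aux

theorem stmt8 (α₁ α₂ : ℝ) (hα₁ : 0 < α₁) (hα₂ : 0 < α₂) :
    StrictConvexOn ℝ (Set.Ici (0:ℝ) ×ˢ Set.Ici (0:ℝ))
      (fun p : ℝ × ℝ => Real.log (zeta 0 p.1 p.2) + p.1 * α₁ + p.2 * α₂) := by
  open Stmt8Aux in
  have hset : Convex ℝ (Set.Ici (0:ℝ) ×ˢ Set.Ici (0:ℝ)) :=
    (convex_Ici 0).prod (convex_Ici 0)
  have hc : ConvexOn ℝ (Set.Ici (0:ℝ) ×ˢ Set.Ici (0:ℝ))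
      (fun p : ℝ × ℝ => Real.log (Z p)) :=
    logZ_convex.subset (Set.subset_univ _) hset
  have hstrict : StrictConvexOn ℝ (Set.Ici (0:ℝ) ×ˢ Set.Ici (0:ℝ))
      (fun p : ℝ × ℝ => Real.log (Z p)) := by
    refine glue hset hc ?_
    intro x _ y _ hxy
    have h := Z_midpoint_strict hxy
    have hlog : Real.log (Z ((1/2:ℝ) • x + (1/2:ℝ) • y) ^ 2) < Real.log (Z x * Z y) :=
      Real.log_lt_log (pow_pos (Zpos _) 2) h
    rw [Real.log_pow, Real.log_mul (Zpos x).ne' (Zpos y).ne'] at hlog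
    push_cast at hlog
    linarith
  have hlin : ConvexOn ℝ (Set.Ici (0:ℝ) ×ˢ Set.Ici (0:ℝ))
      (fun p : ℝ × ℝ => p.1 * α₁ + p.2 * α₂) := by
    refine ⟨hset, ?_⟩
    intro x _ y _ a b _ _ _
    simp only [Prod.fst_add, Prod.snd_add, Prod.smul_fst, Prod.smul_snd, smul_eq_mul]
    exact le_of_eq (by ring)
  have heq : (fun p : ℝ × ℝ => Real.log (zeta 0 p.1 p.2) + p.1 * α₁ + p.2 * α₂)
      = (fun p : ℝ × ℝ => Real.log (Z p)) + (fun p : ℝ × ℝ => p.1 * α₁ + p.2 * α₂) := by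
    funext p
    simp only [Pi.add_apply, zeta_eq]
    ring
  rw [heq]
  exact hstrict.add_convexOn hlin
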